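/- Sorting minimizes product likelihood alignment: let c, c' : Fin k → ℕ be two count vectors with c monotone nondecreasing. Among all permutations π of Fin k, the sum −∑ₐ (c(a) + c'(π⁻¹(a))) · log((c(a) + c'(π⁻¹(a)))/N) (with N = ∑ c + ∑ c') is minimized by any π for which c' ∘ π⁻¹ is monotone nondecreasing. -/

import Mathlib

open Finset

noncomputable def Hfn : ℝ → ℝ := fun x => x * Real.log x

lemma slope_step_mono {x y : ℝ} (hx : 0 ≤ x) (hxy : x ≤ y) :
    Hfn (x + 1) - Hfn x ≤ Hfn (y + 1) - Hfn y := by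
  rcases eq_or_lt_of_le hxy with rfl | hlt
  · exact le_refl _
  have cv : ConvexOn ℝ (Set.Ici 0) Hfn := Real.strictConvexOn_mul_log.convexOn
  have hy : (0:ℝ) ≤ y := le_trans hx hxy
  have h1 := cv.secant_mono (a := x) (x := x + 1) (y := y + 1)
    (Set.mem_Ici.2 hx) (Set.mem_Ici.2 (by linarith)) (Set.mem_Ici.2 (by linarith))
    (by linarith) (by linarith) (by linarith)
  have h2 := cv.secant_mono (a := y + 1) (x := x) (y := y)
    (Set.mem_Ici.2 (by linarith)) (Set.mem_Ici.2 hx) (Set.mem_Ici.2 hy)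
    (by linarith) (by linarith) hxy
  have e1 : x + 1 - x = 1 := by ring
  rw [e1, div_one] at h1
  have d1 : (0:ℝ) < y + 1 - x := by linarith
  have e2 : (Hfn x - Hfn (y+1)) / (x - (y+1)) = (Hfn (y+1) - Hfn x) / (y + 1 - x) := by
    rw [← neg_div_neg_eq]; ring_nf
  have e3 : (Hfn y - Hfn (y+1)) / (y - (y+1)) = Hfn (y+1) - Hfn y := by
    have h : y - (y+1) = -1 := by ring
    rw [h]; field_simp; ring
  rw [e2, e3] at h2
  exact le_trans h1 h2

noncomputable def HN (n : ℕ) : ℝ := (n : ℝ) * Real.log n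

lemma HN_delta_mono {m n : ℕ} (h : m ≤ n) :
    HN (m + 1) - HN m ≤ HN (n + 1) - HN n := by
  have := slope_step_mono (x := (m:ℝ)) (y := (n:ℝ)) (Nat.cast_nonneg m) (by exact_mod_cast h)
  simpa [HN, Hfn] using this

lemma HN_telescope (a b : ℕ) :
    HN (a + b) = HN a + ∑ t ∈ range b, (HN (a + t + 1) - HN (a + t)) := by
  have h := Finset.sum_range_sub (f := fun t => HN (a + t)) (n := b)
  simp only [← Nat.add_assoc] at h
  rw [h]
  simp

lemma HN_expand (a m T : ℕ) (hm : m ≤ T) :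
    HN (a + m) = HN a +
      ∑ t ∈ range T, (if t < m then (1:ℝ) else 0) * (HN (a + t + 1) - HN (a + t)) := by
  rw [HN_telescope a m]
  congr 1
  simp only [ite_mul, one_mul, zero_mul]
  rw [← Finset.sum_filter]
  congr 1
  ext t
  simp only [mem_filter, mem_range]
  omega

lemma key_rearrange {k : ℕ} (c d : Fin k → ℕ) (hc : Monotone c) (hd : Monotone d)
    (τ : Equiv.Perm (Fin k)) :
    ∑ a, HN (c a + d (τ a)) ≤ ∑ a, HN (c a + d a) := by
  classical
  set T := ∑ a, d a with hT
  have hdT : ∀ j, d j ≤ T := fun j =>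
    Finset.single_le_sum (f := d) (fun i _ => Nat.zero_le _) (mem_univ j)
  have expand : ∀ (e : Fin k → ℕ), (∀ j, e j ≤ T) →
      ∑ a, HN (c a + e a) = (∑ a, HN (c a)) +
        ∑ t ∈ range T, ∑ a, (if t < e a then (1:ℝ) else 0) * (HN (c a + t + 1) - HN (c a + t)) := by
    intro e he
    rw [Finset.sum_comm, ← Finset.sum_add_distrib]
    exact Finset.sum_congr rfl (fun a _ => HN_expand (c a) (e a) T (he a))
  rw [expand (fun a => d (τ a)) (fun j => hdT _), expand d hdT]
  refine add_le_add (le_refl _) (Finset.sum_le_sum fun t ht => ?_)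
  -- rearrangement for fixed t
  have hF : Monotone (fun j => if t < d j then (1:ℝ) else 0) := by
    intro i j hij
    by_cases h : t < d i
    · simp [h, lt_of_lt_of_le h (hd hij)]
    · simp only [h, if_false]
      split <;> norm_num
  have hG : Monotone (fun j => HN (c j + t + 1) - HN (c j + t)) := by
    intro i j hij
    exact HN_delta_mono (Nat.add_le_add_right (hc hij) t)
  have := (hF.monovary hG).sum_comp_perm_smul_le_sum_smul (σ := τ)
  simpa only [smul_eq_mul] using this

theorem sorting_minimizes_merged_nll (k : ℕ) (c c' : Fin k → ℕ)
    (hc : Monotone c) (π : Equiv.Perm (Fin k))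
    (hπ : Monotone (fun a => c' (π.symm a))) (σ : Equiv.Perm (Fin k)) :
    (-∑ a, ((c a : ℝ) + (c' (π.symm a) : ℝ)) *
        Real.log (((c a : ℝ) + (c' (π.symm a) : ℝ)) /
          ((∑ a, (c a : ℝ)) + ∑ a, (c' a : ℝ)))) ≤
    -∑ a, ((c a : ℝ) + (c' (σ.symm a) : ℝ)) *
        Real.log (((c a : ℝ) + (c' (σ.symm a) : ℝ)) /
          ((∑ a, (c a : ℝ)) + ∑ a, (c' a : ℝ))) := by
  classical
  set Nr : ℝ := (∑ a, (c a : ℝ)) + ∑ a, (c' a : ℝ) with hNr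
  set Nn : ℕ := (∑ a, c a) + ∑ a, c' a with hNn
  have hNcast : Nr = (Nn : ℝ) := by push_cast [hNr, hNn]; ring
  rcases Nat.eq_zero_or_pos Nn with h0 | hpos
  · -- everything is zero
    have hc0 : ∀ a, c a = 0 := by
      intro a
      have : ∑ a, c a = 0 := by omega
      exact Finset.sum_eq_zero_iff.1 this a (mem_univ a)
    have hc'0 : ∀ a, c' a = 0 := by
      intro a
      have : ∑ a, c' a = 0 := by omega
      exact Finset.sum_eq_zero_iff.1 this a (mem_univ a)
    simp [hc0, hc'0]
  · have hNpos : (0:ℝ) < Nr := by rw [hNcast]; exact_mod_cast hpos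
    -- pointwise log expansion
    have hpt : ∀ x : ℝ, 0 ≤ x → x * Real.log (x / Nr) = x * Real.log x - x * Real.log Nr := by
      intro x hx
      rcases eq_or_lt_of_le hx with rfl | hx'
      · simp
      · rw [Real.log_div (ne_of_gt hx') (ne_of_gt hNpos)]; ring
    have hsum : ∀ (ρ : Equiv.Perm (Fin k)),
        ∑ a, ((c a : ℝ) + (c' (ρ.symm a) : ℝ)) = Nr := by
      intro ρ
      rw [Finset.sum_add_distrib, hNr]
      congr 1
      exact Equiv.sum_comp ρ.symm (fun a => (c' a : ℝ))
    have hexp : ∀ (ρ : Equiv.Perm (Fin k)),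
        ∑ a, ((c a : ℝ) + (c' (ρ.symm a) : ℝ)) *
          Real.log (((c a : ℝ) + (c' (ρ.symm a) : ℝ)) / Nr)
        = (∑ a, HN (c a + c' (ρ.symm a))) - Nr * Real.log Nr := by
      intro ρ
      have : ∀ a : Fin k, ((c a : ℝ) + (c' (ρ.symm a) : ℝ)) *
          Real.log (((c a : ℝ) + (c' (ρ.symm a) : ℝ)) / Nr)
          = HN (c a + c' (ρ.symm a)) - ((c a : ℝ) + (c' (ρ.symm a) : ℝ)) * Real.log Nr := by
        intro a
        rw [hpt _ (by positivity)]
        congr 2 <;> simp [HN]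
      rw [Finset.sum_congr rfl (fun a _ => this a), Finset.sum_sub_distrib,
        ← Finset.sum_mul, hsum ρ]
    rw [hexp π, hexp σ]
    have hkey : ∑ a, HN (c a + c' (σ.symm a)) ≤ ∑ a, HN (c a + c' (π.symm a)) := by
      have := key_rearrange c (fun a => c' (π.symm a)) hc hπ (σ.symm.trans π)
      simpa using this
    linarith
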